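/- Let G be a finite group whose commutator subgroup is nilpotent, and let p be a prime. Then there exists a normal subgroup N of G whose order is coprime to p such that the quotient group G/N has a normal Sylow p-subgroup. -/

import Mathlib

open Subgroup
open scoped commutatorElement

-- characteristic subgroup of a normal subgroup is normal
lemma aux_map_subtype_normal {G : Type*} [Group G] (H : Subgroup G) [H.Normal]
    (K : Subgroup H) (hc : K.Characteristic) : (K.map H.subtype).Normal := by
  constructor
  rintro x ⟨y, hy, rfl⟩ g
  refine ⟨MulAut.conjNormal g y, ?_, by simpa using MulAut.conjNormal_apply g y⟩
  have := (Subgroup.characteristic_iff_map_eq.mp hc (MulAut.conjNormal g))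
  rw [← this]
  exact mem_map_of_mem _ hy

lemma aux_card_sup_dvd {G : Type*} [Group G] [Finite G] (K L : Subgroup G) [L.Normal] :
    Nat.card (K ⊔ L : Subgroup G) ∣ Nat.card K * Nat.card L := by
  have h1 : Nat.card (K ⊔ L : Subgroup G)
      = Nat.card ((K ⊔ L : Subgroup G) ⧸ L.subgroupOf (K ⊔ L)) * Nat.card (L.subgroupOf (K ⊔ L)) :=
    Subgroup.card_eq_card_quotient_mul_card_subgroup _
  have h2 : Nat.card ((K ⊔ L : Subgroup G) ⧸ L.subgroupOf (K ⊔ L))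
      = Nat.card (K ⧸ L.subgroupOf K) :=
    Nat.card_congr (QuotientGroup.quotientInfEquivProdNormalQuotient K L).symm.toEquiv
  have h3 : Nat.card (L.subgroupOf (K ⊔ L)) = Nat.card L :=
    Nat.card_congr (Subgroup.subgroupOfEquivOfLe le_sup_right).toEquiv
  rw [h1, h2, h3]
  exact Nat.mul_dvd_mul_right (Subgroup.card_quotient_dvd_card _) _

lemma aux_finset_sup_normal_card {G : Type*} [Group G] [Finite G]
    (S : Finset ℕ) (f : ℕ → Subgroup G) (hf : ∀ q ∈ S, (f q).Normal) :
    (S.sup f).Normal ∧ Nat.card (S.sup f : Subgroup G) ∣ ∏ q ∈ S, Nat.card (f q) := by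
  classical
  induction S using Finset.induction_on with
  | empty =>
    rw [Finset.sup_empty, Finset.prod_empty]
    exact ⟨inferInstance, by simp [Subgroup.card_bot]⟩
  | insert _ _ ha ih =>
    rename_i a s
    obtain ⟨hn, hd⟩ := ih (fun q hq => hf q (Finset.mem_insert_of_mem hq))
    have hfa : (f a).Normal := hf a (Finset.mem_insert_self a s)
    rw [Finset.sup_insert, Finset.prod_insert ha]
    constructor
    · exact Subgroup.sup_normal _ _
    · have h1 : Nat.card ((f a ⊔ s.sup f : Subgroup G)) ∣ Nat.card (s.sup f : Subgroup G) * Nat.card (f a) := by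
        rw [sup_comm]
        exact aux_card_sup_dvd _ _
      calc Nat.card ((f a ⊔ s.sup f : Subgroup G)) ∣ Nat.card (s.sup f : Subgroup G) * Nat.card (f a) := h1
        _ ∣ (∏ q ∈ s, Nat.card (f q)) * Nat.card (f a) := Nat.mul_dvd_mul_right hd _
        _ = Nat.card (f a) * ∏ q ∈ s, Nat.card (f q) := mul_comm _ _

lemma aux_prod_dvd (S : Finset ℕ) (e : ℕ → ℕ) (n : ℕ)
    (hprime : ∀ q ∈ S, q.Prime) (hdvd : ∀ q ∈ S, q ^ e q ∣ n) :
    (∏ q ∈ S, q ^ e q) ∣ n := by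
  classical
  induction S using Finset.induction_on with
  | empty => simpa using one_dvd n
  | insert _ _ ha ih =>
    rename_i a s
    rw [Finset.prod_insert ha]
    have hcop : Nat.Coprime (a ^ e a) (∏ q ∈ s, q ^ e q) := by
      apply Nat.Coprime.pow_left
      apply Nat.Coprime.prod_right
      intro q hq
      exact Nat.Coprime.pow_right _
        ((Nat.coprime_primes (hprime a (Finset.mem_insert_self a s))
          (hprime q (Finset.mem_insert_of_mem hq))).mpr (by rintro rfl; exact ha hq))
    exact hcop.mul_dvd_of_dvd_of_dvd (hdvd a (Finset.mem_insert_self a s))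
      (ih (fun q hq => hprime q (Finset.mem_insert_of_mem hq))
          (fun q hq => hdvd q (Finset.mem_insert_of_mem hq)))

/-- let `G` be a finite group whose commutator subgroup is nilpotent and let
`p` be a prime.  Then there is a normal subgroup `N` of `G` of order coprime to `p` such
that `G/N` has a normal Sylow `p`-subgroup. -/
theorem exists_normal_coprime_quotient_with_normal_sylow
    (G : Type) [Group G] [Finite G] (hnil : Group.IsNilpotent (commutator G))
    (p : ℕ) (hp : p.Prime) :
    ∃ (N : Subgroup G) (hN : N.Normal), Nat.Coprime (Nat.card N) p ∧
      letI := hN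
      ∃ P : Sylow p (G ⧸ N), (P : Subgroup (G ⧸ N)).Normal := by
  classical
  haveI : Fact p.Prime := ⟨hp⟩
  set H : Subgroup G := commutator G with hHdef
  have hh0 : Nat.card H ≠ 0 := Nat.card_pos.ne'
  set v : ℕ → ℕ := fun q => (Nat.card H).factorization q with hv
  set S : Finset ℕ := (Nat.card H).primeFactors.erase p with hS
  have hSprime : ∀ q ∈ S, q.Prime := fun q hq =>
    Nat.prime_of_mem_primeFactors (Finset.mem_of_mem_erase hq)
  have hSne : ∀ q ∈ S, q ≠ p := fun q hq => Finset.ne_of_mem_erase hq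
  let Q : ∀ q : ℕ, Sylow q H := fun q => default
  let f : ℕ → Subgroup G := fun q => ((Q q : Subgroup H)).map H.subtype
  have hfle : ∀ q, f q ≤ H := fun q => Subgroup.map_subtype_le _
  have hfnorm : ∀ q ∈ S, (f q).Normal := by
    intro q hq
    haveI : Fact q.Prime := ⟨hSprime q hq⟩
    have h4 : ∀ (r : ℕ) (_ : Fact r.Prime) (P : Sylow r H), (↑P : Subgroup H).Normal :=
      ((isNilpotent_of_finite_tfae (G := H)).out 0 3).mp hnil
    have hqn : ((Q q : Subgroup H)).Normal := h4 q ⟨hSprime q hq⟩ (Q q)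
    exact aux_map_subtype_normal H _ (Sylow.characteristic_of_normal (Q q) hqn)
  have hfcard : ∀ q ∈ S, Nat.card (f q) = q ^ v q := by
    intro q hq
    haveI : Fact q.Prime := ⟨hSprime q hq⟩
    have h1 : Nat.card (f q) = Nat.card (Q q : Subgroup H) :=
      (Nat.card_congr (Subgroup.equivMapOfInjective _ _ H.subtype_injective).toEquiv).symm
    rw [h1, Sylow.card_eq_multiplicity]
  set N : Subgroup G := S.sup f with hNdef
  obtain ⟨hNnorm, hNdvd⟩ := aux_finset_sup_normal_card S f hfnorm
  have hNleH : N ≤ H := Finset.sup_le fun q _ => hfle q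
  have hNdvd' : Nat.card N ∣ ∏ q ∈ S, q ^ v q := by
    rwa [Finset.prod_congr rfl hfcard] at hNdvd
  have hdvdN : (∏ q ∈ S, q ^ v q) ∣ Nat.card N := by
    apply aux_prod_dvd S v _ hSprime
    intro q hq
    rw [← hfcard q hq]
    exact Subgroup.card_dvd_of_le (Finset.le_sup hq)
  have hNcard : Nat.card N = ∏ q ∈ S, q ^ v q := Nat.dvd_antisymm hNdvd' hdvdN
  have hcop : Nat.Coprime (Nat.card N) p := by
    rw [hNcard]
    apply Nat.Coprime.prod_left
    intro q hq
    exact Nat.Coprime.pow_left _ ((Nat.coprime_primes (hSprime q hq) hp).mpr (hSne q hq))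
  refine ⟨N, hNnorm, hcop, ?_⟩
  have hprodfact : ∏ q ∈ (Nat.card H).primeFactors, q ^ v q = Nat.card H := by
    conv_rhs => rw [← Nat.factorization_prod_pow_eq_self hh0]
    rw [Finsupp.prod, Nat.support_factorization]
  have hsplit : p ^ v p * ∏ q ∈ S, q ^ v q = Nat.card H := by
    by_cases hp' : p ∈ (Nat.card H).primeFactors
    · rw [hS, Finset.mul_prod_erase _ (fun q => q ^ v q) hp', hprodfact]
    · have hvp : v p = 0 := by
        rw [hv]
        simpa [Nat.support_factorization] using
          (Finsupp.notMem_support_iff.mp (by rwa [Nat.support_factorization]))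
      rw [hS, Finset.erase_eq_of_notMem hp', hvp, pow_zero, one_mul, hprodfact]
  letI := hNnorm
  set π := QuotientGroup.mk' N with hπ
  have hπsurj : Function.Surjective π := QuotientGroup.mk'_surjective N
  set K : Subgroup (G ⧸ N) := H.map π with hKdef
  have hker : (π.comp H.subtype).ker = N.subgroupOf H := by
    rw [← MonoidHom.comap_ker, QuotientGroup.ker_mk']
    rfl
  have hrange : (π.comp H.subtype).range = K := by
    rw [MonoidHom.range_comp, Subgroup.range_subtype]
  have hcards : Nat.card H = Nat.card K * Nat.card N := by
    have h1 := Subgroup.card_eq_card_quotient_mul_card_subgroup (N.subgroupOf H)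
    have h2 : Nat.card (H ⧸ N.subgroupOf H) = Nat.card K := by
      rw [← hker, ← hrange]
      exact Nat.card_congr (QuotientGroup.quotientKerEquivRange (π.comp H.subtype)).toEquiv
    have h3 : Nat.card (N.subgroupOf H) = Nat.card N :=
      Nat.card_congr (Subgroup.subgroupOfEquivOfLe hNleH).toEquiv
    rw [h1, h2, h3]
  have hprodpos : 0 < ∏ q ∈ S, q ^ v q := by
    apply Finset.prod_pos
    intro q hq
    exact pow_pos (hSprime q hq).pos _
  have hKcard : Nat.card K = p ^ v p := by
    apply Nat.eq_of_mul_eq_mul_right hprodpos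
    rw [← hNcard, ← hcards, ← hsplit, hNcard]
  have hKp : IsPGroup p K := IsPGroup.iff_card.mpr ⟨v p, hKcard⟩
  obtain ⟨P, hKP⟩ := hKp.exists_le_sylow
  refine ⟨P, ?_⟩
  have hcommK : Subgroup.map π (_root_.commutator G) = _root_.commutator (G ⧸ N) := by
    rw [_root_.commutator_def, Subgroup.map_commutator,
      Subgroup.map_top_of_surjective π hπsurj, ← _root_.commutator_def]
  have hcomm : _root_.commutator (G ⧸ N) ≤ (P : Subgroup (G ⧸ N)) := by
    rw [← hcommK]; exact hKP
  constructor
  intro x hx g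
  have h1 : ⁅g, x⁆ ∈ commutator (G ⧸ N) :=
    Subgroup.commutator_mem_commutator (Subgroup.mem_top g) (Subgroup.mem_top x)
  have h2 : g * x * g⁻¹ = ⁅g, x⁆ * x := by group
  rw [h2]
  exact mul_mem (hcomm h1) hx
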